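/- arXiv:2006.02145 — 5 statements merged into one kernel-verified Lean document; each statement's English description precedes it below -/
import Mathlib

section
/- A matrix B ∈ M_{nr}(R) satisfies B·u = u·B if and only if B lies in the image of φ; that is, the centraliser of u in the matrix ring M_{nr}(R) is exactly the set of block lower-triangular block-Toeplitz matrices φ(M) with M ∈ M_n(R[X]/(X^r)). -/
open Polynomial

/-- The truncated polynomial ring `R[X]/(X^r)`. -/
noncomputable abbrev TruncPoly (R : Type*) [CommRing R] (r : ℕ) : Type _ :=
  AdjoinRoot ((X : R[X]) ^ r)

/-- The element `∑_{t=0}^{r-1} A_t π^t` of `M_n(R[X]/(X^r))` determined by the family of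
coefficient matrices `A : Fin r → M_n(R)`, where `π` is the image of `X`. -/
noncomputable def toQuot (R : Type*) [CommRing R] (n r : ℕ)
    (A : Fin r → Matrix (Fin n) (Fin n) R) :
    Matrix (Fin n) (Fin n) (TruncPoly R r) :=
  ∑ t : Fin r,
    (AdjoinRoot.root ((X : R[X]) ^ r)) ^ (t : ℕ) •
      (A t).map (fun x => AdjoinRoot.of ((X : R[X]) ^ r) x)

/-- The block lower-triangular `(nr)×(nr)` matrix whose `(i,j)` block is `A_{i-j}` when
`i ≥ j` and zero otherwise. -/
def blockMat (R : Type*) [CommRing R] (n r : ℕ) (A : Fin r → Matrix (Fin n) (Fin n) R) :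
    Matrix (Fin r × Fin n) (Fin r × Fin n) R :=
  fun p q =>
    if ((q.1 : ℕ) ≤ (p.1 : ℕ)) then
      A ⟨(p.1 : ℕ) - (q.1 : ℕ), lt_of_le_of_lt (Nat.sub_le _ _) p.1.isLt⟩ p.2 q.2
    else 0

/-- The unipotent block matrix `u` with `(i,j)` block `I_n` when `i = j` or `i = j+1`, and
zero otherwise. -/
def uMat (R : Type*) [CommRing R] (n r : ℕ) : Matrix (Fin r × Fin n) (Fin r × Fin n) R :=
  fun p q => if p.2 = q.2 ∧ ((p.1 : ℕ) = (q.1 : ℕ) ∨ (p.1 : ℕ) = (q.1 : ℕ) + 1) then 1 else 0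

private lemma aux_mulu (R : Type*) [CommRing R] (n r : ℕ) (B : Matrix (Fin r × Fin n) (Fin r × Fin n) R)
    (p q : Fin r × Fin n) :
    (B * uMat R n r) p q = B p q +
      (if h : (q.1 : ℕ) + 1 < r then B p (⟨(q.1 : ℕ) + 1, h⟩, q.2) else 0) := by
  rw [Matrix.mul_apply]
  have key : ∀ s : Fin r × Fin n, B p s * uMat R n r s q =
      (if s = q then B p s else 0) +
      (if h : (q.1 : ℕ) + 1 < r then (if s = (⟨(q.1 : ℕ) + 1, h⟩, q.2) then B p s else 0) else 0) := by
    intro s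
    unfold uMat
    rcases s with ⟨s1, s2⟩; rcases q with ⟨q1, q2⟩
    by_cases h : (q1 : ℕ) + 1 < r
    · simp only [dif_pos h]
      split_ifs with h1 h2 h3 h2 h3 h3 <;>
        simp_all [Prod.ext_iff, Fin.ext_iff] <;> try omega
    · simp only [dif_neg h]
      split_ifs with h1 h2 h2
      · simp
      · exfalso; apply h2
        obtain ⟨hs2, hs1⟩ := h1
        have := s1.isLt
        have hs1' : (s1 : ℕ) = (q1 : ℕ) := by omega
        exact Prod.ext (Fin.ext hs1') hs2
      · exfalso; apply h1
        rw [Prod.ext_iff] at h2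
        exact ⟨h2.2, Or.inl (congrArg Fin.val h2.1)⟩
      · simp
  rw [Finset.sum_congr rfl (fun s _ => key s), Finset.sum_add_distrib]
  congr 1
  · simp
  · split_ifs with h
    · simp
    · simp

private lemma aux_umul (R : Type*) [CommRing R] (n r : ℕ) (B : Matrix (Fin r × Fin n) (Fin r × Fin n) R)
    (p q : Fin r × Fin n) :
    (uMat R n r * B) p q = B p q +
      (if h : 0 < (p.1 : ℕ) then B (⟨(p.1 : ℕ) - 1, by omega⟩, p.2) q else 0) := by
  rw [Matrix.mul_apply]
  have key : ∀ s : Fin r × Fin n, uMat R n r p s * B s q =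
      (if s = p then B s q else 0) +
      (if h : 0 < (p.1 : ℕ) then (if s = (⟨(p.1 : ℕ) - 1, by omega⟩, p.2) then B s q else 0) else 0) := by
    intro s
    unfold uMat
    rcases s with ⟨s1, s2⟩; rcases p with ⟨p1, p2⟩
    by_cases h : 0 < (p1 : ℕ)
    · simp only [dif_pos h]
      split_ifs with h1 h2 h3 h2 h3 h3 <;>
        simp_all [Prod.ext_iff, Fin.ext_iff] <;> try omega
    · simp only [dif_neg h]
      split_ifs with h1 h2 h2 <;>
        simp_all [Prod.ext_iff, Fin.ext_iff] <;> try omega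
  rw [Finset.sum_congr rfl (fun s _ => key s), Finset.sum_add_distrib]
  congr 1
  · simp
  · split_ifs with h
    · simp
    · simp


private lemma aux_rep (R : Type*) [CommRing R] (r : ℕ) (hr : 0 < r)
    (z : AdjoinRoot ((X : R[X]) ^ r)) :
    ∃ c : Fin r → R, z = ∑ t : Fin r,
      (AdjoinRoot.root ((X : R[X]) ^ r)) ^ (t : ℕ) * AdjoinRoot.of ((X : R[X]) ^ r) (c t) := by
  obtain ⟨p, rfl⟩ := AdjoinRoot.mk_surjective z
  set q := p %ₘ (X : R[X]) ^ r with hq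
  have hmk : AdjoinRoot.mk ((X : R[X]) ^ r) p = AdjoinRoot.mk ((X : R[X]) ^ r) q := by
    rw [hq, Polynomial.modByMonic_eq_sub_mul_div _ ((X : R[X]) ^ r)]
    simp [mul_comm]
  have hdeg : q.natDegree < r := by
    cases subsingleton_or_nontrivial R with
    | inl h =>
      have : q = 0 := Subsingleton.elim _ _
      simpa [this]
    | inr h =>
      have h1 : ((X : R[X]) ^ r) ≠ 1 := by
        intro hc
        have := congrArg Polynomial.natDegree hc
        simp at this
        omega
      have := Polynomial.natDegree_modByMonic_lt p (monic_X_pow r) h1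
      simpa using this
  refine ⟨fun t => q.coeff t, ?_⟩
  rw [hmk]
  conv_lhs => rw [Polynomial.as_sum_range' q r hdeg]
  rw [map_sum]
  rw [← Fin.sum_univ_eq_sum_range
    (fun i => AdjoinRoot.mk ((X : R[X]) ^ r) ((Polynomial.monomial i) (q.coeff i)))]
  congr 1
  ext t
  rw [← Polynomial.C_mul_X_pow_eq_monomial, map_mul, map_pow, mul_comm]
  rfl

/-- A matrix `B ∈ M_{nr}(R)` commutes with `u` if and only if `B` lies in the image of `φ`:
the centraliser of `u` in `M_{nr}(R)` is exactly the set of block lower-triangular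
block-Toeplitz matrices `φ(M)` with `M ∈ M_n(R[X]/(X^r))`. -/
theorem stmt1 (R : Type*) [CommRing R] (n r : ℕ) (hn : 0 < n) (hr : 0 < r)
    (φ : Matrix (Fin n) (Fin n) (TruncPoly R r) → Matrix (Fin r × Fin n) (Fin r × Fin n) R)
    (hφ : ∀ A : Fin r → Matrix (Fin n) (Fin n) R, φ (toQuot R n r A) = blockMat R n r A)
    (B : Matrix (Fin r × Fin n) (Fin r × Fin n) R) :
    B * uMat R n r = uMat R n r * B ↔
      ∃ M : Matrix (Fin n) (Fin n) (TruncPoly R r), φ M = B := by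
  have hcond_iff : B * uMat R n r = uMat R n r * B ↔
      ∀ p q : Fin r × Fin n,
        (if h : (q.1 : ℕ) + 1 < r then B p (⟨(q.1 : ℕ) + 1, h⟩, q.2) else 0) =
        (if h : 0 < (p.1 : ℕ) then B (⟨(p.1 : ℕ) - 1, by omega⟩, p.2) q else 0) := by
    constructor
    · intro hcomm p q
      have := congrFun (congrFun hcomm p) q
      rw [aux_mulu, aux_umul] at this
      exact add_left_cancel this
    · intro h
      funext p q
      rw [aux_mulu, aux_umul, h p q]
  rw [hcond_iff]
  constructor
  · intro hcond
    set A : Fin r → Matrix (Fin n) (Fin n) R :=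
      fun t a b => B (t, a) (⟨0, hr⟩, b) with hA
    have claim : ∀ (j : ℕ) (hj : j < r) (i : ℕ) (hi : i < r) (a b : Fin n),
        B (⟨i, hi⟩, a) (⟨j, hj⟩, b) =
          if h : j ≤ i then B (⟨i - j, by omega⟩, a) (⟨0, hr⟩, b) else 0 := by
      intro j
      induction j with
      | zero => intro hj i hi a b; simp
      | succ j ih =>
        intro hj i hi a b
        have E := hcond (⟨i, hi⟩, a) (⟨j, by omega⟩, b)
        simp only at E
        rw [dif_pos hj] at E
        rcases Nat.eq_zero_or_pos i with h0 | hpos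
        · subst h0
          rw [dif_neg (by omega)] at E
          rw [E, dif_neg (by omega)]
        · rw [dif_pos hpos] at E
          rw [E, ih (by omega) (i - 1) (by omega) a b]
          by_cases hij : j + 1 ≤ i
          · rw [dif_pos (by omega : j ≤ i - 1), dif_pos hij]
            have : (⟨i - 1 - j, by omega⟩ : Fin r) = ⟨i - (j + 1), by omega⟩ :=
              Fin.ext (by simp; omega)
            rw [this]
          · rw [dif_neg (by omega), dif_neg hij]
    refine ⟨toQuot R n r A, ?_⟩
    rw [hφ]
    funext p q
    rcases p with ⟨⟨i, hi⟩, a⟩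
    rcases q with ⟨⟨j, hj⟩, b⟩
    rw [blockMat]
    simp only
    rw [claim j hj i hi a b]
    split_ifs with h
    · rfl
    · rfl
  · rintro ⟨M, rfl⟩
    have hrep : ∀ a b : Fin n, ∃ c : Fin r → R, M a b = ∑ t : Fin r,
        (AdjoinRoot.root ((X : R[X]) ^ r)) ^ (t : ℕ) * AdjoinRoot.of ((X : R[X]) ^ r) (c t) :=
      fun a b => aux_rep R r hr (M a b)
    choose c hc using hrep
    set A : Fin r → Matrix (Fin n) (Fin n) R := fun t a b => c a b t with hA
    have hM : toQuot R n r A = M := by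
      funext a b
      rw [hc a b, toQuot]
      simp [Matrix.sum_apply, hA]
      rfl
    rw [← hM, hφ]
    intro p q
    rcases p with ⟨⟨i, hi⟩, a⟩
    rcases q with ⟨⟨j, hj⟩, b⟩
    simp only [blockMat]
    by_cases h1 : j + 1 < r <;> by_cases h2 : 0 < i
    · rw [dif_pos h1, dif_pos h2]
      by_cases h3 : j + 1 ≤ i
      · rw [if_pos h3, if_pos (by omega : j ≤ i - 1)]
        have : (⟨i - (j + 1), by omega⟩ : Fin r) = ⟨i - 1 - j, by omega⟩ :=
          Fin.ext (by simp; omega)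
        rw [this]
      · rw [if_neg h3, if_neg (by omega)]
    · rw [dif_pos h1, dif_neg h2]
      rw [if_neg (by omega)]
    · rw [dif_neg h1, dif_pos h2]
      rw [if_neg (by omega)]
    · rw [dif_neg h1, dif_neg h2]
end

section
/- An invertible matrix g ∈ GL_{nr}(R) satisfies g·u = u·g if and only if g = φ(h) for some h ∈ GL_n(R[X]/(X^r)); that is, the image of the group embedding GL_n(R[X]/(X^r)) → GL_{nr}(R) induced by the injective ring homomorphism φ is exactly the centraliser of u in GL_{nr}(R). -/
open Polynomial

/-! ### Auxiliary material -/

/-- The nilpotent part of `u`. -/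
def NMat (R : Type*) [CommRing R] (n r : ℕ) : Matrix (Fin r × Fin n) (Fin r × Fin n) R :=
  fun p q => if p.2 = q.2 ∧ (p.1 : ℕ) = (q.1 : ℕ) + 1 then 1 else 0

/-- The nilpotent Jordan block. -/
def Jmat (R : Type*) [CommRing R] (r : ℕ) : Matrix (Fin r) (Fin r) R :=
  Matrix.of fun i j => if (i : ℕ) = (j : ℕ) + 1 then 1 else 0

section Aux

variable {R : Type*} [CommRing R] {n r : ℕ}

lemma pick1 {M : Type*} [AddCommMonoid M] (f : Fin r → M) (m : ℕ) :
    (∑ k : Fin r, if (k : ℕ) = m then f k else 0) =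
      if h : m < r then f ⟨m, h⟩ else 0 := by
  split_ifs with h
  · rw [Finset.sum_eq_single (⟨m, h⟩ : Fin r)]
    · simp
    · intro k _ hk
      rw [if_neg]
      exact fun hh => hk (Fin.ext hh)
    · simp
  · apply Finset.sum_eq_zero
    intro k _
    have := k.isLt
    rw [if_neg (by omega)]

lemma pick2 {M : Type*} [AddCommMonoid M] (f : Fin r → M) (i j : Fin r) :
    (∑ t : Fin r, if (i : ℕ) = (j : ℕ) + (t : ℕ) then f t else 0) =
      if h : (j : ℕ) ≤ (i : ℕ) then
        f ⟨(i : ℕ) - (j : ℕ), lt_of_le_of_lt (Nat.sub_le _ _) i.isLt⟩ else 0 := by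
  split_ifs with h
  · rw [Finset.sum_eq_single (⟨(i : ℕ) - (j : ℕ),
      lt_of_le_of_lt (Nat.sub_le _ _) i.isLt⟩ : Fin r)]
    · rw [if_pos (by simp; omega)]
    · intro k _ hk
      rw [if_neg]
      intro hh
      exact hk (Fin.ext (by simp; omega))
    · simp
  · apply Finset.sum_eq_zero
    intro k _
    rw [if_neg (by omega)]

lemma pick3 {M : Type*} [AddCommMonoid M] (f : Fin r → M) (m : ℕ) (hm : m < r) :
    (∑ k : Fin r, if m = (k : ℕ) + 1 then f k else 0) =
      if h : 1 ≤ m then f ⟨m - 1, lt_of_le_of_lt (Nat.sub_le _ _) hm⟩ else 0 := by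
  split_ifs with h
  · rw [Finset.sum_eq_single (⟨m - 1, lt_of_le_of_lt (Nat.sub_le _ _) hm⟩ : Fin r)]
    · rw [if_pos (by simp; omega)]
    · intro k _ hk
      rw [if_neg]
      intro hh
      exact hk (Fin.ext (by simp; omega))
    · simp
  · apply Finset.sum_eq_zero
    intro k _
    rw [if_neg (by omega)]

lemma uMat_eq : uMat R n r = 1 + NMat R n r := by
  ext p q
  by_cases h1 : p.2 = q.2
  · by_cases h2 : (p.1 : ℕ) = (q.1 : ℕ)
    · have h3 : ¬((p.1 : ℕ) = (q.1 : ℕ) + 1) := by omega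
      simp [uMat, NMat, Matrix.one_apply, Prod.ext_iff, Fin.ext_iff, h1, h2, h3]
    · by_cases h3 : (p.1 : ℕ) = (q.1 : ℕ) + 1 <;>
        simp [uMat, NMat, Matrix.one_apply, Prod.ext_iff, Fin.ext_iff, h1, h2, h3]
  · simp [uMat, NMat, Matrix.one_apply, Prod.ext_iff, h1]

lemma mul_N_apply (M : Matrix (Fin r × Fin n) (Fin r × Fin n) R) (p q : Fin r × Fin n) :
    (M * NMat R n r) p q =
      if h : (q.1 : ℕ) + 1 < r then M p (⟨(q.1 : ℕ) + 1, h⟩, q.2) else 0 := by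
  rw [Matrix.mul_apply, Fintype.sum_prod_type]
  simp only [NMat, mul_ite, mul_one, mul_zero, ite_and]
  simp only [Finset.sum_ite_eq', Finset.mem_univ, if_true]
  exact pick1 (fun k => M p (k, q.2)) ((q.1 : ℕ) + 1)

lemma N_mul_apply (M : Matrix (Fin r × Fin n) (Fin r × Fin n) R) (p q : Fin r × Fin n) :
    (NMat R n r * M) p q =
      if h : 1 ≤ (p.1 : ℕ) then
        M (⟨(p.1 : ℕ) - 1, lt_of_le_of_lt (Nat.sub_le _ _) p.1.isLt⟩, p.2) q else 0 := by
  rw [Matrix.mul_apply, Fintype.sum_prod_type]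
  simp only [NMat, ite_mul, one_mul, zero_mul, ite_and]
  simp only [Finset.sum_ite_eq, Finset.mem_univ, if_true]
  exact pick3 (fun k => M (k, p.2) q) (p.1 : ℕ) p.1.isLt

lemma Jmat_pow (t : ℕ) : ∀ i j : Fin r,
    ((Jmat R r) ^ t) i j = if (i : ℕ) = (j : ℕ) + t then 1 else 0 := by
  induction t with
  | zero =>
    intro i j
    simp [Matrix.one_apply, Fin.ext_iff]
  | succ t ih =>
    intro i j
    rw [pow_succ, Matrix.mul_apply]
    simp only [ih]
    simp only [Jmat, Matrix.of_apply, mul_ite, mul_one, mul_zero]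
    rw [pick1 (fun k => if (i : ℕ) = (k : ℕ) + t then (1 : R) else 0) ((j : ℕ) + 1)]
    have hi := i.isLt
    split_ifs <;> first | rfl | (exfalso; simp -failIfUnchanged only [Fin.val_mk] at *; omega)

lemma Jmat_pow_r : (Jmat R r) ^ r = (0 : Matrix (Fin r) (Fin r) R) := by
  ext i j
  rw [Jmat_pow]
  have := i.isLt
  rw [if_neg (by omega)]
  rfl

/-- The ring homomorphism `R[X]/(X^r) → M_r(R)` sending `π` to the Jordan block. -/
noncomputable def liftJ (R : Type*) [CommRing R] (r : ℕ) :
    TruncPoly R r →+* Matrix (Fin r) (Fin r) R := by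
  apply Ideal.Quotient.lift _
    (eval₂RingHom' (algebraMap R _) (Jmat R r) (fun a => Algebra.commute_algebraMap_left a (Jmat R r)))
  intro g H
  rcases Ideal.mem_span_singleton.1 H with ⟨y, hy⟩
  rw [hy, map_mul]
  have : eval₂RingHom' (algebraMap R (Matrix (Fin r) (Fin r) R)) (Jmat R r)
      (fun a => Algebra.commute_algebraMap_left a (Jmat R r)) ((X : R[X]) ^ r) = 0 := by
    simp only [eval₂RingHom'_apply, eval₂_X_pow, Jmat_pow_r]
  rw [this, zero_mul]

lemma liftJ_mk (g : R[X]) :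
    liftJ R r (AdjoinRoot.mk _ g) = eval₂ (algebraMap R _) (Jmat R r) g :=
  Ideal.Quotient.lift_mk _ _ _

lemma liftJ_root : liftJ R r (AdjoinRoot.root ((X : R[X]) ^ r)) = Jmat R r := by
  rw [AdjoinRoot.root, liftJ_mk, eval₂_X]

lemma liftJ_of (c : R) :
    liftJ R r (AdjoinRoot.of ((X : R[X]) ^ r) c) = algebraMap R _ c := by
  rw [← AdjoinRoot.mk_C, liftJ_mk, eval₂_C]

/-- The map `φ` realized concretely. -/
noncomputable def psi (R : Type*) [CommRing R] (n r : ℕ)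
    (M : Matrix (Fin n) (Fin n) (TruncPoly R r)) :
    Matrix (Fin r × Fin n) (Fin r × Fin n) R :=
  Matrix.of fun p q => liftJ R r (M p.2 q.2) p.1 q.1

lemma psi_mul (M N : Matrix (Fin n) (Fin n) (TruncPoly R r)) :
    psi R n r (M * N) = psi R n r M * psi R n r N := by
  ext p q
  simp only [psi, Matrix.of_apply, Matrix.mul_apply, map_sum, map_mul, Matrix.sum_apply,
    Fintype.sum_prod_type]
  exact Finset.sum_comm

lemma psi_toQuot (A : Fin r → Matrix (Fin n) (Fin n) R) :
    psi R n r (toQuot R n r A) = blockMat R n r A := by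
  ext p q
  simp only [psi, Matrix.of_apply, toQuot, Matrix.sum_apply, Matrix.smul_apply,
    Matrix.map_apply, smul_eq_mul, map_sum, map_mul, map_pow, liftJ_root, liftJ_of,
    Matrix.algebraMap_eq_diagonal, Matrix.mul_diagonal, Jmat_pow, Pi.algebraMap_apply,
    Algebra.algebraMap_self, RingHom.id_apply, ite_mul, one_mul, zero_mul]
  rw [pick2 (fun t => A t p.2 q.2) p.1 q.1]
  simp only [blockMat]
  split_ifs <;> rfl

/-- Coefficients of `1`. -/
def oneCoef (R : Type*) [CommRing R] (n r : ℕ) : Fin r → Matrix (Fin n) (Fin n) R :=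
  fun t => if (t : ℕ) = 0 then 1 else 0

lemma blockMat_one (hr : 0 < r) : blockMat R n r (oneCoef R n r) = 1 := by
  ext p q
  have hi := p.1.isLt
  by_cases h : (q.1 : ℕ) ≤ (p.1 : ℕ)
  · by_cases h2 : (p.1 : ℕ) = (q.1 : ℕ)
    · have hs : (p.1 : ℕ) - (q.1 : ℕ) = 0 := by omega
      simp [blockMat, oneCoef, h, hs, h2, Matrix.one_apply, Prod.ext_iff, Fin.ext_iff,
        Fin.val_mk]
    · have hs : ¬((p.1 : ℕ) - (q.1 : ℕ) = 0) := by omega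
      simp [blockMat, oneCoef, h, hs, h2, Matrix.one_apply, Prod.ext_iff, Fin.ext_iff,
        Fin.val_mk]
  · have h2 : ¬((p.1 : ℕ) = (q.1 : ℕ)) := by omega
    simp [blockMat, oneCoef, h, h2, Matrix.one_apply, Prod.ext_iff, Fin.ext_iff]

lemma toQuot_one (hr : 0 < r) : toQuot R n r (oneCoef R n r) = 1 := by
  rw [toQuot, Finset.sum_eq_single (⟨0, hr⟩ : Fin r)]
  · have h1 : oneCoef R n r ⟨0, hr⟩ = 1 := by simp [oneCoef]
    rw [h1, pow_zero, one_smul, Matrix.map_one _ (map_zero _) (map_one _)]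
  · intro t _ ht
    have : ¬((t : ℕ) = 0) := fun hh => ht (Fin.ext hh)
    simp [oneCoef, this]
  · simp

lemma blockMat_inj (hr : 0 < r) {A B : Fin r → Matrix (Fin n) (Fin n) R}
    (h : blockMat R n r A = blockMat R n r B) : A = B := by
  funext t a b
  have h2 := congrFun (congrFun h (t, a)) (⟨0, hr⟩, b)
  simpa [blockMat] using h2

lemma toeplitz (hr : 0 < r) {g : Matrix (Fin r × Fin n) (Fin r × Fin n) R}
    (hg : g * NMat R n r = NMat R n r * g) :
    g = blockMat R n r (fun t a b => g (t, a) (⟨0, hr⟩, b)) := by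
  have key : ∀ (j : ℕ) (hj : j < r) (i : Fin r) (a b : Fin n),
      g (i, a) (⟨j, hj⟩, b) =
        blockMat R n r (fun t a b => g (t, a) (⟨0, hr⟩, b)) (i, a) (⟨j, hj⟩, b) := by
    intro j
    induction j with
    | zero =>
      intro hj i a b
      simp [blockMat]
    | succ j ih =>
      intro hj i a b
      have hj' : j < r := by omega
      have hc := congrFun (congrFun hg (i, a)) (⟨j, hj'⟩, b)
      rw [mul_N_apply, N_mul_apply] at hc
      simp only [Fin.val_mk] at hc
      rw [dif_pos hj] at hc
      by_cases hi : 1 ≤ (i : ℕ)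
      · rw [dif_pos hi] at hc
        rw [hc, ih hj' _ a b]
        simp only [blockMat, Fin.val_mk]
        have := i.isLt
        have haux : ∀ x y (hx : x < r) (hy : y < r), x = y →
            g (⟨x, hx⟩, a) (⟨0, hr⟩, b) = g (⟨y, hy⟩, a) (⟨0, hr⟩, b) := by
          rintro x y hx hy rfl; rfl
        split_ifs with h1 h2 h2
        · exact haux _ _ _ _ (by omega)
        · omega
        · omega
        · rfl
      · rw [dif_neg hi] at hc
        rw [hc]
        simp only [blockMat, Fin.val_mk]
        rw [if_neg (by omega)]
  ext p q
  obtain ⟨i, a⟩ := p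
  obtain ⟨⟨j, hj⟩, b⟩ := q
  exact key j hj i a b

/-- Coefficients of `u`. -/
def uCoef (R : Type*) [CommRing R] (n r : ℕ) : Fin r → Matrix (Fin n) (Fin n) R :=
  fun t => if (t : ℕ) ≤ 1 then 1 else 0

lemma blockMat_uCoef : blockMat R n r (uCoef R n r) = uMat R n r := by
  ext p q
  have hi := p.1.isLt
  by_cases h : (q.1 : ℕ) ≤ (p.1 : ℕ)
  · by_cases h2 : (p.1 : ℕ) - (q.1 : ℕ) ≤ 1
    · have h3 : (p.1 : ℕ) = (q.1 : ℕ) ∨ (p.1 : ℕ) = (q.1 : ℕ) + 1 := by omega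
      simp [blockMat, uCoef, uMat, h, h2, h3, Matrix.one_apply, Fin.val_mk]
    · have h3 : ¬((p.1 : ℕ) = (q.1 : ℕ) ∨ (p.1 : ℕ) = (q.1 : ℕ) + 1) := by omega
      simp [blockMat, uCoef, uMat, h, h2, h3, Fin.val_mk]
  · have h3 : ¬((p.1 : ℕ) = (q.1 : ℕ) ∨ (p.1 : ℕ) = (q.1 : ℕ) + 1) := by omega
    simp [blockMat, uMat, h, h3]

lemma toQuot_uCoef_comm (M : Matrix (Fin n) (Fin n) (TruncPoly R r)) :
    M * toQuot R n r (uCoef R n r) = toQuot R n r (uCoef R n r) * M := by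
  have hval : toQuot R n r (uCoef R n r) =
      (∑ t : Fin r, if (t : ℕ) ≤ 1 then (AdjoinRoot.root ((X : R[X]) ^ r)) ^ (t : ℕ) else 0) •
        (1 : Matrix (Fin n) (Fin n) (TruncPoly R r)) := by
    rw [toQuot, Finset.sum_smul]
    apply Finset.sum_congr rfl
    intro t _
    by_cases h : (t : ℕ) ≤ 1
    · rw [if_pos h]
      simp only [uCoef, if_pos h]
      rw [Matrix.map_one _ (map_zero _) (map_one _)]
    · rw [if_neg h]
      simp only [uCoef, if_neg h]
      rw [Matrix.map_zero _ (map_zero _), smul_zero, zero_smul]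
  rw [hval, Matrix.mul_smul, Matrix.smul_mul, mul_one, one_mul]

lemma trunc_repr (hr : 0 < r) (x : TruncPoly R r) :
    ∃ c : Fin r → R, x = ∑ t : Fin r,
      AdjoinRoot.of ((X : R[X]) ^ r) (c t) * (AdjoinRoot.root ((X : R[X]) ^ r)) ^ (t : ℕ) := by
  obtain ⟨p, rfl⟩ := AdjoinRoot.mk_surjective x
  have hm : ((X : R[X]) ^ r).Monic := monic_X_pow r
  set q : R[X] := p %ₘ ((X : R[X]) ^ r) with hq
  have h1 : AdjoinRoot.mk ((X : R[X]) ^ r) p = AdjoinRoot.mk _ q := by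
    conv_lhs => rw [← modByMonic_add_div p ((X : R[X]) ^ r)]
    rw [map_add, map_mul, AdjoinRoot.mk_self, zero_mul, add_zero]
  have hdeg : q.natDegree < r := by
    rcases subsingleton_or_nontrivial R with hR | hR
    · have : q = 0 := Subsingleton.elim _ _
      simp [this, hr]
    · by_cases h0 : q = 0
      · simp [h0, hr]
      · have hlt := degree_modByMonic_lt p hm
        rw [← hq, degree_X_pow] at hlt
        exact (natDegree_lt_iff_degree_lt h0).mpr hlt
  refine ⟨fun t => q.coeff (t : ℕ), ?_⟩
  rw [h1, ← AdjoinRoot.aeval_eq, aeval_eq_sum_range' hdeg, ← Fin.sum_univ_eq_sum_range]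
  apply Finset.sum_congr rfl
  intro t _
  rw [Algebra.smul_def, AdjoinRoot.algebraMap_eq]

lemma toQuot_surj (hr : 0 < r) (M : Matrix (Fin n) (Fin n) (TruncPoly R r)) :
    ∃ A : Fin r → Matrix (Fin n) (Fin n) R, toQuot R n r A = M := by
  choose c hc using fun a b => trunc_repr hr (M a b)
  refine ⟨fun t => Matrix.of fun a b => c a b t, ?_⟩
  ext a b
  rw [toQuot]
  simp only [Matrix.sum_apply, Matrix.smul_apply, Matrix.map_apply, Matrix.of_apply,
    smul_eq_mul]
  rw [hc a b]
  exact Finset.sum_congr rfl fun t _ => (mul_comm _ _)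

end Aux

/-- An invertible matrix `g ∈ GL_{nr}(R)` commutes with `u` if and only if `g = φ(h)` for some
`h ∈ GL_n(R[X]/(X^r))`: the image of the group embedding `GL_n(R[X]/(X^r)) → GL_{nr}(R)`
induced by the injective ring homomorphism `φ` is exactly the centraliser of `u` in
`GL_{nr}(R)`. -/
theorem stmt2 (R : Type*) [CommRing R] (n r : ℕ) (hn : 0 < n) (hr : 0 < r)
    (φ : Matrix (Fin n) (Fin n) (TruncPoly R r) → Matrix (Fin r × Fin n) (Fin r × Fin n) R)
    (hφ : ∀ A : Fin r → Matrix (Fin n) (Fin n) R, φ (toQuot R n r A) = blockMat R n r A)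
    (g : (Matrix (Fin r × Fin n) (Fin r × Fin n) R)ˣ) :
    (g : Matrix (Fin r × Fin n) (Fin r × Fin n) R) * uMat R n r =
        uMat R n r * (g : Matrix (Fin r × Fin n) (Fin r × Fin n) R) ↔
      ∃ h : (Matrix (Fin n) (Fin n) (TruncPoly R r))ˣ,
        φ (h : Matrix (Fin n) (Fin n) (TruncPoly R r)) =
          (g : Matrix (Fin r × Fin n) (Fin r × Fin n) R) := by
  constructor
  · intro hcomm
    rw [uMat_eq, mul_add, add_mul, mul_one, one_mul] at hcomm
    have hN : (g : Matrix (Fin r × Fin n) (Fin r × Fin n) R) * NMat R n r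
        = NMat R n r * g := add_left_cancel hcomm
    have hNinv : (↑g⁻¹ : Matrix (Fin r × Fin n) (Fin r × Fin n) R) * NMat R n r
        = NMat R n r * (↑g⁻¹ : Matrix (Fin r × Fin n) (Fin r × Fin n) R) :=
      Commute.units_inv_left hN
    have hA := toeplitz hr hN
    have hB := toeplitz hr hNinv
    set A : Fin r → Matrix (Fin n) (Fin n) R :=
      fun t a b => (g : Matrix (Fin r × Fin n) (Fin r × Fin n) R) (t, a) (⟨0, hr⟩, b) with hA'
    set B : Fin r → Matrix (Fin n) (Fin n) R :=
      fun t a b => (↑g⁻¹ : Matrix (Fin r × Fin n) (Fin r × Fin n) R) (t, a) (⟨0, hr⟩, b) with hB'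
    have key : ∀ (P Q : Fin r → Matrix (Fin n) (Fin n) R),
        blockMat R n r P * blockMat R n r Q = 1 → toQuot R n r P * toQuot R n r Q = 1 := by
      intro P Q hPQ
      obtain ⟨C, hC⟩ := toQuot_surj hr (toQuot R n r P * toQuot R n r Q)
      rw [← hC]
      have h1 : blockMat R n r C = 1 := by
        rw [← psi_toQuot, hC, psi_mul, psi_toQuot, psi_toQuot, hPQ]
      have h2 : C = oneCoef R n r := blockMat_inj hr (by rw [h1, blockMat_one hr])
      rw [h2, toQuot_one hr]
    refine ⟨⟨toQuot R n r A, toQuot R n r B, ?_, ?_⟩, ?_⟩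
    · exact key A B (by rw [← hA, ← hB, Units.mul_inv])
    · exact key B A (by rw [← hA, ← hB, Units.inv_mul])
    · show φ (toQuot R n r A) = ↑g
      rw [hφ, ← hA]
  · rintro ⟨h, hh⟩
    obtain ⟨A, hA⟩ := toQuot_surj hr (h : Matrix (Fin n) (Fin n) (TruncPoly R r))
    have hg : (g : Matrix (Fin r × Fin n) (Fin r × Fin n) R) = psi R n r (toQuot R n r A) := by
      rw [psi_toQuot, ← hh, ← hA, hφ]
    have hu : uMat R n r = psi R n r (toQuot R n r (uCoef R n r)) := by
      rw [psi_toQuot, blockMat_uCoef]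
    rw [hg, hu, ← psi_mul, ← psi_mul, toQuot_uCoef_comm]
end

section
/- Let u, a, b, c, υ, x, y, z ∈ k and set, in M_2(k[ε]), A = [[1,u],[0,1]]·[[1+aε, bε],[cε, 1−aε]] and X = [[1,υ],[0,1]]·[[1+xε, yε],[zε, 1−xε]]. Then X·A = A·X if and only if c·υ = u·z and 2·u·x + u·υ·z = 2·a·υ + u·c·υ; in particular the condition does not involve b or y. -/
/-- The matrix `[[1,u],[0,1]]·[[1+aε, bε],[cε, 1−aε]]` in `M_2(k[ε])`. -/
def dmat (k : Type*) [CommRing k] (u a b c : k) :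
    Matrix (Fin 2) (Fin 2) (DualNumber k) :=
  !![1, algebraMap k (DualNumber k) u; 0, 1] *
    !![1 + algebraMap k (DualNumber k) a * DualNumber.eps,
        algebraMap k (DualNumber k) b * DualNumber.eps;
      algebraMap k (DualNumber k) c * DualNumber.eps,
        1 - algebraMap k (DualNumber k) a * DualNumber.eps]

/-- With `A = [[1,u],[0,1]]·[[1+aε, bε],[cε, 1−aε]]` and
`X = [[1,υ],[0,1]]·[[1+xε, yε],[zε, 1−xε]]` in `M_2(k[ε])`, one has `X·A = A·X` if and only
if `c·υ = u·z` and `2·u·x + u·υ·z = 2·a·υ + u·c·υ`; in particular the condition does not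
involve `b` or `y`. -/
theorem stmt9 (k : Type*) [CommRing k] (u a b c υ x y z : k) :
    dmat k υ x y z * dmat k u a b c = dmat k u a b c * dmat k υ x y z ↔
      (c * υ = u * z ∧ 2 * u * x + u * υ * z = 2 * a * υ + u * c * υ) := by
  simp only [dmat, Matrix.mul_fin_two, ← Matrix.ext_iff, Fin.forall_fin_two,
    Matrix.cons_val_zero, Matrix.cons_val_one, Matrix.head_cons, Matrix.head_fin_const,
    Matrix.of_apply, TrivSqZeroExt.ext_iff, DualNumber.eps, TrivSqZeroExt.algebraMap_eq_inl']
  simp [TrivSqZeroExt.inl_mul_inl]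
  constructor
  · rintro ⟨⟨h1, -, h2⟩, -, -⟩
    exact ⟨by linear_combination h1, by linear_combination h2⟩
  · rintro ⟨g1, g2⟩
    exact ⟨⟨by linear_combination g1, by ring, by linear_combination g2⟩,
      by ring, by linear_combination -g1⟩
end

section
/- Suppose k is a field of characteristic different from 2 and u ≠ 0. Let a, b, c, υ, x, y, z ∈ k and set, in M_2(k[ε]), A = [[1,u],[0,1]]·[[1+aε, bε],[cε, 1−aε]] and X = [[1,υ],[0,1]]·[[1+xε, yε],[zε, 1−xε]]. Then X·A = A·X if and only if z = (c/u)·υ and x = −(c/(2u))·υ² + ((cu+2a)/(2u))·υ; in particular, for each fixed A the set of tuples (υ,x,y,z) with X·A = A·X is parametrised freely by the pair (υ, y) ∈ k². -/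
/-- Commutation of two `dmat` matrices is equivalent to two polynomial equations. -/
theorem dmat_comm_iff' (k : Type*) [Field k] (u a b c υ x y z : k) :
    dmat k υ x y z * dmat k u a b c = dmat k u a b c * dmat k υ x y z ↔
    (υ * c = u * z ∧ 2*(u*x) + u*(υ*z) = 2*(a*υ) + u*(c*υ)) := by
  unfold dmat
  rw [Matrix.mul_fin_two, Matrix.mul_fin_two, Matrix.mul_fin_two, Matrix.mul_fin_two,
    ← Matrix.ext_iff]
  simp only [Fin.forall_fin_two, Matrix.cons_val', Matrix.cons_val_zero, Matrix.cons_val_one,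
    Matrix.head_cons, Matrix.empty_val', Matrix.cons_val_fin_one, Matrix.head_fin_const,
    Matrix.of_apply]
  simp only [TrivSqZeroExt.ext_iff, TrivSqZeroExt.fst_mul, TrivSqZeroExt.snd_mul,
    TrivSqZeroExt.fst_add, TrivSqZeroExt.snd_add, TrivSqZeroExt.fst_sub, TrivSqZeroExt.snd_sub,
    TrivSqZeroExt.fst_one, TrivSqZeroExt.snd_one, TrivSqZeroExt.fst_zero, TrivSqZeroExt.snd_zero,
    DualNumber.fst_eps, DualNumber.snd_eps, TrivSqZeroExt.algebraMap_eq_inl',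
    TrivSqZeroExt.fst_inl, TrivSqZeroExt.snd_inl, smul_eq_mul, MulOpposite.smul_eq_mul_unop,
    MulOpposite.unop_op, smul_zero, zero_smul, mul_zero, zero_mul, add_zero, zero_add,
    mul_one, one_mul, eq_self_iff_true, true_and, and_true, Algebra.algebraMap_self_apply, sub_zero]
  constructor
  · rintro ⟨⟨h1, -, h3⟩, -⟩
    exact ⟨by linear_combination h1, by linear_combination h3⟩
  · rintro ⟨h1, h2⟩
    exact ⟨⟨by linear_combination h1, by ring, by linear_combination h2⟩, by ring,
      by linear_combination -h1⟩

/-- The explicit solved form of the commutation equations. -/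
theorem dmat_comm_iff (k : Type*) [Field k] (h2 : (2 : k) ≠ 0) (u : k) (hu : u ≠ 0)
    (a b c υ x y z : k) :
    dmat k υ x y z * dmat k u a b c = dmat k u a b c * dmat k υ x y z ↔
    (z = (c / u) * υ ∧
      x = -(c / (2 * u)) * υ ^ 2 + ((c * u + 2 * a) / (2 * u)) * υ) := by
  rw [dmat_comm_iff']
  constructor
  · rintro ⟨h1, h3⟩
    constructor
    · field_simp
      linear_combination -h1
    · field_simp
      linear_combination h3 + υ*h1
  · rintro ⟨h1, h3⟩
    subst h1 h3
    constructor <;> field_simp <;> ring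

/-- Over a field `k` of characteristic `≠ 2` and with `u ≠ 0`: for
`A = [[1,u],[0,1]]·[[1+aε, bε],[cε, 1−aε]]` and `X = [[1,υ],[0,1]]·[[1+xε, yε],[zε, 1−xε]]`,
`X·A = A·X` iff `z = (c/u)·υ` and `x = −(c/(2u))·υ² + ((cu+2a)/(2u))·υ`; in particular, for
fixed `A`, the commuting tuples `(υ,x,y,z)` are parametrised freely by `(υ,y) ∈ k²`. -/
theorem stmt10 (k : Type*) [Field k] (h2 : (2 : k) ≠ 0) (u : k) (hu : u ≠ 0)
    (a b c υ x y z : k) :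
    (dmat k υ x y z * dmat k u a b c = dmat k u a b c * dmat k υ x y z ↔
      (z = (c / u) * υ ∧
        x = -(c / (2 * u)) * υ ^ 2 + ((c * u + 2 * a) / (2 * u)) * υ)) ∧
    (∀ υ' y' : k, ∃! p : k × k,
      dmat k υ' p.1 y' p.2 * dmat k u a b c = dmat k u a b c * dmat k υ' p.1 y' p.2) := by
  refine ⟨dmat_comm_iff k h2 u hu a b c υ x y z, fun υ' y' => ?_⟩
  refine ⟨(-(c / (2 * u)) * υ' ^ 2 + ((c * u + 2 * a) / (2 * u)) * υ', (c / u) * υ'), ?_, ?_⟩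
  · show dmat k υ' _ y' _ * dmat k u a b c = dmat k u a b c * dmat k υ' _ y' _
    rw [dmat_comm_iff k h2 u hu a b c υ' _ y' _]
    exact ⟨rfl, rfl⟩
  · rintro ⟨x₁, z₁⟩ h
    rw [dmat_comm_iff k h2 u hu a b c υ' _ y' _] at h
    exact Prod.ext h.2 h.1
end

section
/- Let b ∈ k with b ≠ 0, let X ∈ M_2(k[ε]) with det X = 1, and set N = 1 + ε·[[0,b],[0,0]] ∈ M_2(k[ε]). Then X·N = N·X if and only if there exists β ∈ k such that X̄ = [[1,β],[0,1]] or X̄ = −[[1,β],[0,1]], where X̄ ∈ M_2(k) is the entrywise image of X under the projection k[ε] → k sending a + bε to a; that is, the centraliser of N in SL_2(k[ε]) consists exactly of the determinant-one matrices whose reduction modulo ε is ± a unipotent upper-triangular matrix. -/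
/-- Let `b ≠ 0` in a field `k`, let `X ∈ M_2(k[ε])` with `det X = 1`, and let
`N = 1 + ε·[[0,b],[0,0]]`. Then `X·N = N·X` if and only if the reduction `X̄` of `X` modulo
`ε` is `±` a unipotent upper-triangular matrix `[[1,β],[0,1]]`: the centraliser of `N` in
`SL_2(k[ε])` consists exactly of the determinant-one matrices whose reduction modulo `ε` is
`±` unipotent upper-triangular. -/
theorem stmt12 (k : Type*) [Field k] (b : k) (hb : b ≠ 0)
    (X : Matrix (Fin 2) (Fin 2) (DualNumber k)) (hX : X.det = 1) :
    X * (1 + (DualNumber.eps : DualNumber k) •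
          (!![(0 : k), b; 0, 0]).map (fun a => algebraMap k (DualNumber k) a)) =
        (1 + (DualNumber.eps : DualNumber k) •
          (!![(0 : k), b; 0, 0]).map (fun a => algebraMap k (DualNumber k) a)) * X ↔
      ∃ β : k, X.map (fun d => TrivSqZeroExt.fst d) = !![1, β; 0, 1] ∨
        X.map (fun d => TrivSqZeroExt.fst d) = -!![1, β; 0, 1] := by
  have hfa : ∀ a : k, (algebraMap k (DualNumber k) a).fst = a := fun _ => rfl
  have hsa : ∀ a : k, (algebraMap k (DualNumber k) a).snd = 0 := fun _ => rfl
  have hdet : (X 0 0).fst * (X 1 1).fst - (X 0 1).fst * (X 1 0).fst = 1 := by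
    have := congrArg TrivSqZeroExt.fst hX
    rw [Matrix.det_fin_two] at this
    simpa using this
  have key : X * (1 + (DualNumber.eps : DualNumber k) •
          (!![(0 : k), b; 0, 0]).map (fun a => algebraMap k (DualNumber k) a)) =
        (1 + (DualNumber.eps : DualNumber k) •
          (!![(0 : k), b; 0, 0]).map (fun a => algebraMap k (DualNumber k) a)) * X ↔
      (X 1 0).fst = 0 ∧ (X 0 0).fst = (X 1 1).fst := by
    rw [← Matrix.ext_iff]
    simp only [Fin.forall_fin_two, Matrix.mul_apply, Fin.sum_univ_two, Matrix.add_apply,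
      Matrix.one_apply, Matrix.smul_apply, Matrix.map_apply, TrivSqZeroExt.ext_iff,
      Matrix.cons_val', Matrix.cons_val_zero, Matrix.cons_val_one, Matrix.head_cons,
      Matrix.head_fin_const, Matrix.empty_val', Matrix.cons_val_fin_one,
      TrivSqZeroExt.fst_mul, TrivSqZeroExt.snd_mul, TrivSqZeroExt.fst_add, TrivSqZeroExt.snd_add,
      TrivSqZeroExt.fst_smul, TrivSqZeroExt.snd_smul, hfa, hsa,
      DualNumber.fst_eps, DualNumber.snd_eps, smul_eq_mul]
    simp [TrivSqZeroExt.fst_one, TrivSqZeroExt.snd_one, smul_eq_mul]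
    constructor
    · rintro ⟨⟨h1, h2⟩, -⟩
      refine ⟨h1.resolve_left hb, mul_left_cancel₀ hb ?_⟩
      linear_combination h2
    · rintro ⟨h1, h2⟩
      exact ⟨⟨Or.inr h1, by linear_combination b * h2⟩, Or.inl h1⟩
  rw [key]
  constructor
  · rintro ⟨h1, h2⟩
    have hsq : (X 0 0).fst * (X 0 0).fst = 1 := by
      rw [h1, mul_zero, sub_zero, ← h2] at hdet
      exact hdet
    rcases mul_self_eq_one_iff.mp hsq with h | h
    · refine ⟨(X 0 1).fst, Or.inl ?_⟩
      ext i j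
      fin_cases i <;> fin_cases j <;>
        simp [Matrix.map_apply, h1, h, ← h2]
    · refine ⟨-(X 0 1).fst, Or.inr ?_⟩
      ext i j
      fin_cases i <;> fin_cases j <;>
        simp [Matrix.map_apply, h1, h, ← h2]
  · rintro ⟨β, h | h⟩ <;>
    · have h10 := congrArg (fun M => M 1 0) h
      have h00 := congrArg (fun M => M 0 0) h
      have h11 := congrArg (fun M => M 1 1) h
      simp [Matrix.map_apply] at h10 h00 h11
      exact ⟨h10, h00.trans h11.symm⟩
end
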